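/- Let {X_n : n ∈ ℕ} be a sequence of nontrivial real Banach spaces (each X_n ≠ {0}), let 1 < p < ∞, and let X_p = (⊕_{n=1}^∞ X_n)_{ℓ_p} be their ℓ_p-sum. Then 0 is an SCD point of B_{X_p}. -/

import Mathlib

open Set Metric

variable {X : Type*} [NormedAddCommGroup X] [NormedSpace ℝ X]

/-- A slice of a bounded convex set `A`. -/
def IsSlice (A S : Set X) : Prop :=
  S.Nonempty ∧ ∃ (f : X →L[ℝ] ℝ) (α : ℝ), 0 < α ∧
    S = {x | x ∈ A ∧ sSup (f '' A) - α < f x}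

/-- `V` is a determining sequence for the point `a` of `A`. -/
def Determining (A : Set X) (V : ℕ → Set X) (a : X) : Prop :=
  ∀ B ⊆ A, (∀ n, (B ∩ V n).Nonempty) → a ∈ closure (convexHull ℝ B)

/-- `a` is a slicely countably determined point of `A`. -/
def SCDPoint (A : Set X) (a : X) : Prop :=
  a ∈ A ∧ ∃ V : ℕ → Set X, (∀ n, IsSlice A (V n)) ∧ Determining A V a

section Aux

variable (Y : ℕ → Type*) [∀ n, NormedAddCommGroup (Y n)] [∀ n, NormedSpace ℝ (Y n)]
  (p : ENNReal) [Fact (1 ≤ p)]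

/-- Coordinate projection as a continuous linear map. -/
noncomputable def lpProjCLM (n : ℕ) : lp Y p →L[ℝ] Y n :=
  LinearMap.mkContinuous
    { toFun := fun f => f n
      map_add' := fun f g => by
        show (↑(f + g) : ∀ i, Y i) n = (↑f : ∀ i, Y i) n + (↑g : ∀ i, Y i) n
        rw [lp.coeFn_add]; rfl
      map_smul' := fun c f => by
        show (↑(c • f) : ∀ i, Y i) n = c • (↑f : ∀ i, Y i) n
        rw [lp.coeFn_smul]; rfl }
    1 (fun f => by
      have hp0 : p ≠ 0 := (lt_of_lt_of_le zero_lt_one (Fact.out : 1 ≤ p)).ne'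
      simpa using lp.norm_apply_le_norm hp0 f n)

@[simp] theorem lpProjCLM_apply (n : ℕ) (f : lp Y p) : lpProjCLM Y p n f = f n := rfl

end Aux

set_option maxHeartbeats 1600000 in
/-- for a sequence of nontrivial Banach spaces and `1 < p < ∞`, the point
`0` is an SCD point of the unit ball of the `ℓ_p`-sum. -/
theorem stmt14 (X : ℕ → Type*) [∀ n, NormedAddCommGroup (X n)] [∀ n, NormedSpace ℝ (X n)]
    [∀ n, CompleteSpace (X n)] [∀ n, Nontrivial (X n)]
    (p : ENNReal) [Fact (1 ≤ p)] (hp1 : 1 < p) (hp2 : p ≠ ⊤) :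
    SCDPoint (Metric.closedBall (0 : lp X p) 1) 0 := by
  set q := p.toReal with hqdef
  have hq1 : 1 < q := by
    rw [hqdef, ← ENNReal.toReal_one]
    exact (ENNReal.toReal_lt_toReal ENNReal.one_ne_top hp2).2 hp1
  have hq0 : 0 < q := lt_trans zero_lt_one hq1
  -- norm-one functionals on each coordinate
  have hg : ∀ n, ∃ g : (X n) →L[ℝ] ℝ, ‖g‖ = 1 := fun n => by
    obtain ⟨x, hx⟩ := exists_ne (0 : X n)
    obtain ⟨g, hgn, _⟩ := exists_dual_vector ℝ x (norm_ne_zero_iff.mpr hx)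
    exact ⟨g, hgn⟩
  choose g hgnorm using hg
  set A := Metric.closedBall (0 : lp X p) 1 with hA
  set F : ℕ → (lp X p →L[ℝ] ℝ) := fun n => (g n).comp (lpProjCLM X p n) with hFdef
  have hFval : ∀ n (x : lp X p), F n x = g n (x n) := fun n x => rfl
  have hA0 : (0 : lp X p) ∈ A := mem_closedBall_self zero_le_one
  have hAne : A.Nonempty := ⟨0, hA0⟩
  have hFle : ∀ n, ∀ x ∈ A, F n x ≤ 1 := by
    intro n x hx
    have h1 : ‖x‖ ≤ 1 := by simpa [hA, mem_closedBall_zero_iff] using hx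
    have h2 : F n x ≤ ‖g n (x n)‖ := by rw [hFval]; exact le_abs_self _
    have h3 : ‖g n (x n)‖ ≤ ‖g n‖ * ‖x n‖ := (g n).le_opNorm _
    have h4 : ‖x n‖ ≤ ‖x‖ := lp.norm_apply_le_norm (zero_lt_one.trans hp1).ne' x n
    calc F n x ≤ ‖g n‖ * ‖x n‖ := h2.trans h3
      _ = ‖x n‖ := by rw [hgnorm]; ring
      _ ≤ 1 := h4.trans h1
  have hsup : ∀ n, sSup ((F n) '' A) = 1 := by
    intro n
    refine csSup_eq_of_forall_le_of_forall_lt_exists_gt (hAne.image _) ?_ ?_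
    · rintro y ⟨x, hx, rfl⟩
      exact hFle n x hx
    · intro w hw
      rcases lt_or_ge w 0 with hw0 | hw0
      · exact ⟨F n 0, ⟨0, hA0, rfl⟩, by simpa using hw0⟩
      · have hns : ∀ (n : ℕ) (z : X n), ‖(lp.single p n z : lp X p)‖ = ‖z‖ := by
          intro n z
          have := lp.norm_single (E := X) (zero_lt_one.trans hp1) n z
          simpa using this
        have hwlt : w < ‖g n‖ := by rw [hgnorm]; exact hw
        obtain ⟨z, hz1, hz2⟩ := (g n).exists_lt_apply_of_lt_opNorm hwlt
        have hz' : ∃ z' : X n, ‖z'‖ ≤ 1 ∧ w < g n z' := by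
          rcases le_or_gt 0 (g n z) with h | h
          · exact ⟨z, hz1.le, by rwa [Real.norm_eq_abs, abs_of_nonneg h] at hz2⟩
          · refine ⟨-z, by rw [norm_neg]; exact hz1.le, ?_⟩
            rw [map_neg]
            rwa [Real.norm_eq_abs, abs_of_neg h] at hz2
        obtain ⟨z', hz'1, hz'2⟩ := hz'
        refine ⟨F n (lp.single p n z'), ⟨lp.single p n z', ?_, rfl⟩, ?_⟩
        · simp only [hA, mem_closedBall_zero_iff]
          rw [hns n z']; exact hz'1
        · rw [hFval, lp.single_apply_self]; exact hz'2
  set V : ℕ → Set (lp X p) := fun m =>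
    {x | x ∈ A ∧ sSup ((F m.unpair.1) '' A) - 1/(m.unpair.2+1) < F m.unpair.1 x} with hVdef
  refine ⟨hA0, V, fun m => ?_, ?_⟩
  · -- IsSlice
    refine ⟨?_, F m.unpair.1, 1/(m.unpair.2+1), by positivity, rfl⟩
    obtain ⟨y, ⟨x, hxA, rfl⟩, hy⟩ := exists_lt_of_lt_csSup (hAne.image (F m.unpair.1))
      (sub_lt_self _ (by positivity : (0:ℝ) < 1/(m.unpair.2+1)))
    exact ⟨x, hxA, hy⟩
  · -- Determining
    intro B hBA hBV
    rw [Metric.mem_closure_iff]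
    intro ε hε
    have hε2 : 0 < ε / 2 := half_pos hε
    -- choose k
    obtain ⟨k, hk2, hk1⟩ : ∃ k : ℕ, (k:ℝ) ^ (1/q - 1) < ε/2 ∧ 1 ≤ k := by
      have h1 : Filter.Tendsto (fun x : ℝ => x ^ (-(1 - 1/q))) Filter.atTop (nhds 0) :=
        tendsto_rpow_neg_atTop (by
          have : 1/q < 1 := by
            rw [div_lt_one hq0]; exact hq1
          linarith)
      have h2 : Filter.Tendsto (fun n : ℕ => ((n:ℝ)) ^ (1/q - 1)) Filter.atTop (nhds 0) := by
        have := h1.comp (tendsto_natCast_atTop_atTop (R := ℝ))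
        simpa [Function.comp_def, neg_sub] using this
      exact ((h2.eventually (gt_mem_nhds hε2)).and (Filter.eventually_ge_atTop 1)).exists
    have hk0 : (0:ℝ) < (k:ℝ) := by exact_mod_cast hk1
    -- choose K
    obtain ⟨K, hK⟩ := exists_nat_gt (q / (ε/2) ^ q)
    set α : ℝ := 1/((K:ℝ)+1) with hαdef
    have hα0 : 0 < α := by positivity
    have hα1 : α ≤ 1 := by
      rw [hαdef, div_le_one (by positivity)]
      have : (0:ℝ) ≤ K := Nat.cast_nonneg K
      linarith
    have hεq : 0 < (ε/2) ^ q := Real.rpow_pos_of_pos hε2 q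
    have hKα : q * α < (ε/2)^q := by
      rw [hαdef, mul_one_div, div_lt_iff₀ (by positivity)]
      rw [div_lt_iff₀ hεq] at hK
      nlinarith [hεq]
    -- choose points
    have hb : ∀ i : ℕ, ∃ x, x ∈ B ∧ x ∈ V (Nat.pair i K) := by
      intro i
      obtain ⟨x, hx1, hx2⟩ := hBV (Nat.pair i K)
      exact ⟨x, hx1, hx2⟩
    choose b hbB hbV using hb
    have hbA : ∀ i, b i ∈ A := fun i => hBA (hbB i)
    have hbnorm : ∀ i, ‖b i‖ ≤ 1 := fun i =>
      mem_closedBall_zero_iff.mp (hbA i)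
    have hbcoord : ∀ i, 1 - α < ‖(b i) i‖ := by
      intro i
      have h := (hbV i).2
      rw [Nat.unpair_pair] at h
      simp only [hsup] at h
      have h1 : 1 - α < F i (b i) := by
        rw [hαdef]
        exact h
      have h2 : F i (b i) ≤ ‖(b i) i‖ := by
        rw [hFval]
        calc g i ((b i) i) ≤ ‖g i ((b i) i)‖ := le_abs_self _
          _ ≤ ‖g i‖ * ‖(b i) i‖ := (g i).le_opNorm _
          _ = ‖(b i) i‖ := by rw [hgnorm]; ring
      linarith
    set c : ℕ → lp X p := fun i => lp.single p i ((b i) i) with hcdef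
    set y : lp X p := (k:ℝ)⁻¹ • ∑ i ∈ Finset.range k, b i with hydef
    refine ⟨y, ?_, ?_⟩
    · -- y ∈ convexHull ℝ B
      have hy : y = ∑ i ∈ Finset.range k, (k:ℝ)⁻¹ • b i := by
        rw [hydef, Finset.smul_sum]
      rw [hy]
      refine (convex_convexHull ℝ B).sum_mem (fun i _ => by positivity) ?_
        (fun i _ => subset_convexHull ℝ B (hbB i))
      rw [Finset.sum_const, Finset.card_range, nsmul_eq_mul, mul_inv_cancel₀ hk0.ne']
    · -- dist 0 y < ε
      rw [dist_zero_left]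
      -- norm of sum of singles
      have hcsum : ‖∑ i ∈ Finset.range k, c i‖ ≤ (k:ℝ) ^ (1/q) := by
        have h1 : ‖∑ i ∈ Finset.range k, c i‖ ^ q = ∑ i ∈ Finset.range k, ‖(b i) i‖ ^ q :=
          lp.norm_sum_single hq0 (fun i => (b i) i) (Finset.range k)
        have h2 : ∑ i ∈ Finset.range k, ‖(b i) i‖ ^ q ≤ (k:ℝ) := by
          calc ∑ i ∈ Finset.range k, ‖(b i) i‖ ^ q ≤ ∑ _i ∈ Finset.range k, (1:ℝ) := by
                refine Finset.sum_le_sum fun i _ => ?_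
                refine Real.rpow_le_one (norm_nonneg _) ?_ hq0.le
                exact (lp.norm_apply_le_norm (zero_lt_one.trans hp1).ne' (b i) i).trans (hbnorm i)
            _ = (k:ℝ) := by simp
        calc ‖∑ i ∈ Finset.range k, c i‖
            = ((‖∑ i ∈ Finset.range k, c i‖ ^ q) ^ q⁻¹) := by
              rw [Real.rpow_rpow_inv (norm_nonneg _) hq0.ne']
          _ ≤ (k:ℝ) ^ q⁻¹ := by
              refine Real.rpow_le_rpow (by positivity) ?_ (by positivity)
              rw [h1]; exact h2
          _ = (k:ℝ) ^ (1/q) := by rw [one_div]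
      -- remainder estimate
      have hrem : ∀ i, ‖b i - c i‖ < ε/2 := by
        intro i
        have hnc : ‖b i - c i‖ ^ q = ‖b i‖ ^ q - ‖(b i) i‖ ^ q := by
          have := lp.norm_compl_sum_single hq0 (b i) ({i} : Finset ℕ)
          simpa [hcdef] using this
        have hb1 : ‖b i‖ ^ q ≤ 1 := Real.rpow_le_one (norm_nonneg _) (hbnorm i) hq0.le
        have hbern : 1 - q * α ≤ (1 - α) ^ q := by
          have := one_add_mul_self_le_rpow_one_add (show (-1:ℝ) ≤ -α by linarith) hq1.le
          simpa [sub_eq_add_neg, mul_neg] using this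
        have hcl : (1 - α) ^ q ≤ ‖(b i) i‖ ^ q :=
          Real.rpow_le_rpow (by linarith) (hbcoord i).le hq0.le
        have hlt : ‖b i - c i‖ ^ q < (ε/2) ^ q := by
          rw [hnc]
          calc ‖b i‖ ^ q - ‖(b i) i‖ ^ q ≤ 1 - (1 - α) ^ q := by linarith
            _ ≤ q * α := by linarith
            _ < (ε/2) ^ q := hKα
        by_contra hcon
        push_neg at hcon
        exact absurd (Real.rpow_le_rpow hε2.le hcon hq0.le) (not_le.mpr hlt)
      -- combine
      have hsplit : ∑ i ∈ Finset.range k, b i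
          = (∑ i ∈ Finset.range k, c i) + ∑ i ∈ Finset.range k, (b i - c i) := by
        rw [← Finset.sum_add_distrib]
        refine Finset.sum_congr rfl fun i _ => ?_
        abel
      have hrsum : ‖∑ i ∈ Finset.range k, (b i - c i)‖ < (k:ℝ) * (ε/2) := by
        calc ‖∑ i ∈ Finset.range k, (b i - c i)‖ ≤ ∑ i ∈ Finset.range k, ‖b i - c i‖ :=
              norm_sum_le _ _
          _ < ∑ _i ∈ Finset.range k, (ε/2) :=
              Finset.sum_lt_sum_of_nonempty (by simp [Finset.nonempty_range_iff]; omega) (fun i _ => hrem i)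
          _ = (k:ℝ) * (ε/2) := by simp [mul_comm]
      have hnorm : ‖y‖ < ε := by
        have h1 : ‖y‖ = (k:ℝ)⁻¹ * ‖∑ i ∈ Finset.range k, b i‖ := by
          rw [hydef, norm_smul, Real.norm_eq_abs, abs_of_pos (by positivity)]
        have h2 : ‖∑ i ∈ Finset.range k, b i‖ < (k:ℝ) ^ (1/q) + (k:ℝ) * (ε/2) := by
          rw [hsplit]
          calc ‖(∑ i ∈ Finset.range k, c i) + ∑ i ∈ Finset.range k, (b i - c i)‖
              ≤ ‖∑ i ∈ Finset.range k, c i‖ + ‖∑ i ∈ Finset.range k, (b i - c i)‖ :=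
                norm_add_le _ _
            _ < (k:ℝ) ^ (1/q) + (k:ℝ) * (ε/2) := by
                exact add_lt_add_of_le_of_lt hcsum hrsum
        have h3 : (k:ℝ)⁻¹ * ((k:ℝ) ^ (1/q) + (k:ℝ) * (ε/2)) = (k:ℝ) ^ (1/q - 1) + ε/2 := by
          rw [mul_add]
          congr 1
          · rw [Real.rpow_sub hk0, Real.rpow_one]
            ring
          · field_simp
        calc ‖y‖ = (k:ℝ)⁻¹ * ‖∑ i ∈ Finset.range k, b i‖ := h1
          _ < (k:ℝ)⁻¹ * ((k:ℝ) ^ (1/q) + (k:ℝ) * (ε/2)) := by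
              exact mul_lt_mul_of_pos_left h2 (by positivity)
          _ = (k:ℝ) ^ (1/q - 1) + ε/2 := h3
          _ < ε/2 + ε/2 := by linarith
          _ = ε := by ring
      exact hnorm
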